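/- For t, α ≥ 0, μ > 0 and k ≥ 1, the function W_{α,k}(t) = 2 g'_{α,k}(t) t + g_{α,k}(t) (with g_{α,k}(t) = k(μ²+t)^α/(k+(μ²+t)^α)) satisfies |W'_{α,k}(t)| t ≤ |W'_{α,k}(t)|(μ² + t) ≤ 3(α + 1) W_{α,k}(t) for all t ≥ 0. -/

import Mathlib

open Real

/-- The smooth truncation `g_{α,k}(t) = k(μ²+t)^α / (k+(μ²+t)^α)`, `k` real. -/
noncomputable def gTrunc (μ α k : ℝ) : ℝ → ℝ :=
  fun t => k * (μ ^ 2 + t) ^ α / (k + (μ ^ 2 + t) ^ α)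

/-- `W_{α,k}(t) = 2 g'_{α,k}(t) t + g_{α,k}(t)`. -/
noncomputable def WTrunc (μ α k : ℝ) : ℝ → ℝ :=
  fun t => 2 * deriv (gTrunc μ α k) t * t + gTrunc μ α k t

lemma rpow_shift {s : ℝ} (hs : 0 < s) (β : ℝ) : s ^ β * s = s ^ (β + 1) := by
  have h := Real.rpow_add hs β 1
  rw [Real.rpow_one] at h
  exact h.symm

/-- Explicit derivative of `gTrunc`. -/
lemma gTrunc_hasDerivAt (μ α k : ℝ) (hk : 1 ≤ k) (x : ℝ) (hx : 0 < μ ^ 2 + x) :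
    HasDerivAt (gTrunc μ α k)
      (k ^ 2 * α * (μ ^ 2 + x) ^ (α - 1) / (k + (μ ^ 2 + x) ^ α) ^ 2) x := by
  have hne : (μ ^ 2 + x) ≠ 0 := ne_of_gt hx
  have hs : HasDerivAt (fun y : ℝ => μ ^ 2 + y) 1 x := by
    simpa using (hasDerivAt_id x).const_add (μ ^ 2)
  have hu : HasDerivAt (fun y : ℝ => (μ ^ 2 + y) ^ α)
      (α * (μ ^ 2 + x) ^ (α - 1) * 1) x :=
    (Real.hasDerivAt_rpow_const (Or.inl hne)).comp x hs
  have hup : 0 < (μ ^ 2 + x) ^ α := Real.rpow_pos_of_pos hx α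
  have hD : k + (μ ^ 2 + x) ^ α ≠ 0 := by nlinarith
  have hdiv := (hu.const_mul k).div (hu.const_add k) hD
  refine hdiv.congr_deriv ?_
  field_simp
  ring

/-- Explicit second derivative: derivative of the derivative formula. -/
lemma gTrunc_deriv_hasDerivAt (μ α k : ℝ) (hk : 1 ≤ k) (x : ℝ) (hx : 0 < μ ^ 2 + x) :
    HasDerivAt (fun y : ℝ => k ^ 2 * α * (μ ^ 2 + y) ^ (α - 1) / (k + (μ ^ 2 + y) ^ α) ^ 2)
      (k ^ 2 * α * (μ ^ 2 + x) ^ (α - 2) *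
        ((α - 1) * (k + (μ ^ 2 + x) ^ α) - 2 * α * (μ ^ 2 + x) ^ α) /
        (k + (μ ^ 2 + x) ^ α) ^ 3) x := by
  have hne : (μ ^ 2 + x) ≠ 0 := ne_of_gt hx
  have hs : HasDerivAt (fun y : ℝ => μ ^ 2 + y) 1 x := by
    simpa using (hasDerivAt_id x).const_add (μ ^ 2)
  have hu : HasDerivAt (fun y : ℝ => (μ ^ 2 + y) ^ α)
      (α * (μ ^ 2 + x) ^ (α - 1) * 1) x :=
    (Real.hasDerivAt_rpow_const (Or.inl hne)).comp x hs
  have hv : HasDerivAt (fun y : ℝ => (μ ^ 2 + y) ^ (α - 1))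
      ((α - 1) * (μ ^ 2 + x) ^ (α - 1 - 1) * 1) x :=
    (Real.hasDerivAt_rpow_const (Or.inl hne)).comp x hs
  rw [show α - 1 - 1 = α - 2 by ring] at hv
  have hup : 0 < (μ ^ 2 + x) ^ α := Real.rpow_pos_of_pos hx α
  have hD : k + (μ ^ 2 + x) ^ α ≠ 0 := by nlinarith
  have hD2 : (k + (μ ^ 2 + x) ^ α) ^ 2 ≠ 0 := pow_ne_zero 2 hD
  have hDsq : HasDerivAt (fun y : ℝ => (k + (μ ^ 2 + y) ^ α) ^ 2)
      (2 * (k + (μ ^ 2 + x) ^ α) ^ 1 * (α * (μ ^ 2 + x) ^ (α - 1) * 1)) x := by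
    have hp := (hu.const_add k).pow 2
    simp at hp ⊢
    exact hp
  have hdiv := (hv.const_mul (k ^ 2 * α)).div hDsq hD2
  refine hdiv.congr_deriv ?_
  have f1 : (μ ^ 2 + x) ^ (α - 2) * (μ ^ 2 + x) = (μ ^ 2 + x) ^ (α - 1) := by
    rw [rpow_shift hx]; congr 1; ring
  have f2 : (μ ^ 2 + x) ^ (α - 1) * (μ ^ 2 + x) = (μ ^ 2 + x) ^ α := by
    rw [rpow_shift hx]; congr 1; ring
  have e1 : (μ ^ 2 + x) ^ (α - 1) = (μ ^ 2 + x) ^ (α - 2) * (μ ^ 2 + x) := f1.symm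
  have e2 : (μ ^ 2 + x) ^ α = (μ ^ 2 + x) ^ (α - 2) * (μ ^ 2 + x) * (μ ^ 2 + x) := by
    rw [f1, f2]
  rw [e1, e2]
  field_simp

set_option maxHeartbeats 1000000 in
/-- For `t, α ≥ 0`, `μ > 0`, `k ≥ 1`:
`|W'_{α,k}(t)| t ≤ |W'_{α,k}(t)|(μ²+t) ≤ 3(α+1) W_{α,k}(t)`. -/
theorem stmt8 (μ α k : ℝ) (hμ : 0 < μ) (hα : 0 ≤ α) (hk : 1 ≤ k) :
    ∀ t : ℝ, 0 ≤ t →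
      |deriv (WTrunc μ α k) t| * t ≤ |deriv (WTrunc μ α k) t| * (μ ^ 2 + t) ∧
        |deriv (WTrunc μ α k) t| * (μ ^ 2 + t) ≤ 3 * (α + 1) * WTrunc μ α k t := by
  intro t ht
  have hsp : 0 < μ ^ 2 + t := by positivity
  have hup : 0 < (μ ^ 2 + t) ^ α := Real.rpow_pos_of_pos hsp α
  have hDp : 0 < k + (μ ^ 2 + t) ^ α := by nlinarith
  set s : ℝ := μ ^ 2 + t with hs_def
  set φ : ℝ := k ^ 2 * α * s ^ (α - 1) / (k + s ^ α) ^ 2 with hφ_def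
  set φ' : ℝ := k ^ 2 * α * s ^ (α - 2) *
      ((α - 1) * (k + s ^ α) - 2 * α * s ^ α) / (k + s ^ α) ^ 3 with hφ'_def
  -- derivative of W
  have hWhas : HasDerivAt (WTrunc μ α k) (2 * φ' * t + 3 * φ) t := by
    rw [hφ'_def, hφ_def, hs_def]
    have hF : HasDerivAt
        (fun x : ℝ => 2 * (k ^ 2 * α * (μ ^ 2 + x) ^ (α - 1) / (k + (μ ^ 2 + x) ^ α) ^ 2) * x
          + gTrunc μ α k x)
        (2 * (k ^ 2 * α * (μ ^ 2 + t) ^ (α - 2) *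
          ((α - 1) * (k + (μ ^ 2 + t) ^ α) - 2 * α * (μ ^ 2 + t) ^ α) /
          (k + (μ ^ 2 + t) ^ α) ^ 3) * t +
          3 * (k ^ 2 * α * (μ ^ 2 + t) ^ (α - 1) / (k + (μ ^ 2 + t) ^ α) ^ 2)) t := by
      have h1 := ((gTrunc_deriv_hasDerivAt μ α k hk t hsp).const_mul 2).mul (hasDerivAt_id t)
      have h2 := gTrunc_hasDerivAt μ α k hk t hsp
      refine (h1.add h2).congr_deriv ?_
      simp only [id_eq]
      ring
    apply hF.congr_of_eventuallyEq
    have hev : ∀ᶠ x in nhds t, 0 < μ ^ 2 + x := by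
      have : ∀ᶠ x in nhds t, -μ ^ 2 < x := eventually_gt_nhds (by nlinarith)
      filter_upwards [this] with x hx
      linarith
    filter_upwards [hev] with x hx
    unfold WTrunc
    rw [(gTrunc_hasDerivAt μ α k hk x hx).deriv]
  have hWderiv : deriv (WTrunc μ α k) t = 2 * φ' * t + 3 * φ := hWhas.deriv
  have hgderiv : deriv (gTrunc μ α k) t = φ := (gTrunc_hasDerivAt μ α k hk t hsp).deriv
  have hWval : WTrunc μ α k t = 2 * φ * t + gTrunc μ α k t := by
    unfold WTrunc; rw [hgderiv]
  -- rpow facts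
  have f1 : s ^ (α - 2) * s = s ^ (α - 1) := by rw [rpow_shift hsp]; congr 1; ring
  have f2 : s ^ (α - 1) * s = s ^ α := by rw [rpow_shift hsp]; congr 1; ring
  have hwp : 0 < s ^ (α - 2) := Real.rpow_pos_of_pos hsp _
  have hw1p : 0 < s ^ (α - 1) := Real.rpow_pos_of_pos hsp _
  -- nonnegativity
  have hφnn : 0 ≤ φ := by
    rw [hφ_def]
    exact div_nonneg (mul_nonneg (mul_nonneg (by positivity) hα) hw1p.le) (by positivity)
  have hgnn : 0 ≤ gTrunc μ α k t := by
    unfold gTrunc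
    exact div_nonneg (mul_nonneg (by linarith) (by positivity)) (by nlinarith)
  -- |φ'| * s ≤ (α+1) * φ
  have hE : |(α - 1) * (k + s ^ α) - 2 * α * s ^ α| ≤ (α + 1) * (k + s ^ α) := by
    rw [abs_le]
    constructor <;>
      nlinarith [mul_nonneg hα (by linarith : (0:ℝ) ≤ k), mul_nonneg hα hup.le]
  have hCnn : 0 ≤ k ^ 2 * α * s ^ (α - 2) :=
    mul_nonneg (mul_nonneg (by positivity) hα) hwp.le
  have h1 : |φ'| * s ≤ (α + 1) * φ := by
    rw [hφ'_def, hφ_def, abs_div, abs_mul, abs_of_nonneg hCnn,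
      abs_of_pos (pow_pos hDp 3)]
    rw [div_mul_eq_mul_div, ← mul_div_assoc, div_le_div_iff₀ (by positivity) (by positivity)]
    have hC : 0 ≤ k ^ 2 * α * s ^ (α - 2) * s * (k + s ^ α) ^ 2 :=
      mul_nonneg (mul_nonneg hCnn hsp.le) (by positivity)
    have hkey := mul_le_mul_of_nonneg_left hE hC
    rw [← f1]
    nlinarith [hkey]
  -- φ * s ≤ α * g
  have h2 : φ * s ≤ α * gTrunc μ α k t := by
    rw [hφ_def]
    unfold gTrunc
    rw [← hs_def, div_mul_eq_mul_div, mul_assoc (k ^ 2 * α), f2, ← mul_div_assoc,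
      div_le_div_iff₀ (by positivity) hDp]
    nlinarith [mul_nonneg (mul_nonneg (mul_nonneg hα (by linarith : (0:ℝ) ≤ k)) hup.le)
      (by nlinarith : (0:ℝ) ≤ (k + s ^ α) - k), hup, hDp]
  -- triangle inequality
  have htri : |2 * φ' * t + 3 * φ| ≤ 2 * |φ'| * t + 3 * φ := by
    calc |2 * φ' * t + 3 * φ| ≤ |2 * φ' * t| + |3 * φ| := abs_add_le _ _
      _ = 2 * |φ'| * t + 3 * φ := by
          rw [abs_mul, abs_mul, abs_mul, abs_of_nonneg ht, abs_of_nonneg hφnn]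
          norm_num
  constructor
  · apply mul_le_mul_of_nonneg_left _ (abs_nonneg _)
    rw [hs_def]
    nlinarith [sq_nonneg μ]
  · rw [hWderiv, hWval]
    have step1 : |2 * φ' * t + 3 * φ| * s ≤ (2 * |φ'| * t + 3 * φ) * s :=
      mul_le_mul_of_nonneg_right htri hsp.le
    have step2 : (2 * |φ'| * t + 3 * φ) * s
        ≤ 2 * ((α + 1) * φ) * t + 3 * (α * gTrunc μ α k t) := by
      nlinarith [mul_le_mul_of_nonneg_right h1 ht, h2]
    have step3 : 2 * ((α + 1) * φ) * t + 3 * (α * gTrunc μ α k t)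
        ≤ 3 * (α + 1) * (2 * φ * t + gTrunc μ α k t) := by
      nlinarith [mul_nonneg (add_nonneg hα zero_le_one) (mul_nonneg hφnn ht), hgnn]
    linarith
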